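/- Let M be a monoidal category, C a category, and (Tr, τ) a categorified trace from M to C. Then for every object x of M the traciator at (x, 𝟙) is the canonical identification: τ_{x,𝟙} ≫ Tr(λ_x) = Tr(ρ_x), where λ_x : 𝟙 ⊗ x ≅ x and ρ_x : x ⊗ 𝟙 ≅ x are the unitors of M; equivalently, modulo the unitors, τ_{x,𝟙} = id_{Tr(x)}. -/

import Mathlib

open CategoryTheory MonoidalCategory

/-- A categorified trace from a monoidal category `M` to a category `C`: a functor
`Tr : M ⥤ C` together with natural isomorphisms (traciators)
`τ x y : Tr (x ⊗ y) ≅ Tr (y ⊗ x)` satisfying the traciator axiom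
`τ_{x, y ⊗ z} = τ_{z ⊗ x, y} ∘ τ_{x ⊗ y, z}` (with associators inserted). -/
structure CategorifiedTrace (M : Type*) [Category M] [MonoidalCategory M]
    (C : Type*) [Category C] where
  /-- the underlying trace functor -/
  Tr : M ⥤ C
  /-- the traciators -/
  τ : ∀ x y : M, Tr.obj (x ⊗ y) ≅ Tr.obj (y ⊗ x)
  /-- naturality of the traciators -/
  naturality : ∀ {x x' y y' : M} (f : x ⟶ x') (g : y ⟶ y'),
    Tr.map (f ⊗ₘ g) ≫ (τ x' y').hom = (τ x y).hom ≫ Tr.map (g ⊗ₘ f)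
  /-- the traciator axiom `τ_{x, y ⊗ z} = τ_{z ⊗ x, y} ∘ τ_{x ⊗ y, z}` -/
  traciator : ∀ x y z : M,
    Tr.map (α_ x y z).hom ≫ (τ x (y ⊗ z)).hom ≫ Tr.map (α_ y z x).hom =
      (τ (x ⊗ y) z).hom ≫ Tr.map (α_ z x y).inv ≫ (τ (z ⊗ x) y).hom

lemma CategorifiedTrace.tau_congr {M : Type*} [Category M] [MonoidalCategory M]
    {C : Type*} [Category C] (T : CategorifiedTrace M C) {x x' y y' : M}
    (f : x ≅ x') (g : y ≅ y') :
    (T.τ x' y').hom = T.Tr.map (f.inv ⊗ₘ g.inv) ≫ (T.τ x y).hom ≫ T.Tr.map (g.hom ⊗ₘ f.hom) := by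
  have h := T.naturality f.inv g.inv
  rw [← Category.assoc, h, Category.assoc, ← T.Tr.map_comp, tensorHom_comp_tensorHom]
  simp

/-- The traciator at `(x, 𝟙)` is the canonical identification: modulo the unitors,
`τ_{x,𝟙} = id_{Tr x}`. -/
theorem CategorifiedTrace.traciator_tensorUnit_right
    {M : Type*} [Category M] [MonoidalCategory M] {C : Type*} [Category C]
    (T : CategorifiedTrace M C) (x : M) :
    (T.τ x (𝟙_ M)).hom ≫ T.Tr.map (λ_ x).hom = T.Tr.map (ρ_ x).hom := by
  have key := T.traciator x (𝟙_ M) (𝟙_ M)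
  rw [T.tau_congr (Iso.refl x) (λ_ (𝟙_ M)).symm] at key
  rw [T.tau_congr (ρ_ x).symm (Iso.refl (𝟙_ M))] at key
  rw [T.tau_congr (λ_ x).symm (Iso.refl (𝟙_ M))] at key
  simp only [Iso.symm_hom, Iso.symm_inv, Iso.refl_hom, Iso.refl_inv, Category.assoc,
    ← Functor.map_comp_assoc, ← Functor.map_comp] at key
  have c1 : (α_ x (𝟙_ M) (𝟙_ M)).hom ≫ (𝟙 x ⊗ₘ (λ_ (𝟙_ M)).hom) = (ρ_ x).hom ⊗ₘ 𝟙 (𝟙_ M) := by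
    coherence
  rw [c1, cancel_epi, cancel_epi] at key
  have goal' : T.Tr.map ((𝟙 (𝟙_ M) ⊗ₘ (ρ_ x).inv) ≫ (α_ (𝟙_ M) x (𝟙_ M)).inv ≫
        ((λ_ x).hom ⊗ₘ 𝟙 (𝟙_ M))) ≫ (T.τ x (𝟙_ M)).hom ≫ T.Tr.map (λ_ x).hom =
      T.Tr.map ((𝟙 (𝟙_ M) ⊗ₘ (ρ_ x).inv) ≫ (α_ (𝟙_ M) x (𝟙_ M)).inv ≫
        ((λ_ x).hom ⊗ₘ 𝟙 (𝟙_ M))) ≫ T.Tr.map (ρ_ x).hom := by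
    calc
      _ = (T.Tr.map ((𝟙 (𝟙_ M) ⊗ₘ (ρ_ x).inv) ≫ (α_ (𝟙_ M) x (𝟙_ M)).inv ≫
            ((λ_ x).hom ⊗ₘ 𝟙 (𝟙_ M))) ≫ (T.τ x (𝟙_ M)).hom ≫
            T.Tr.map (𝟙 (𝟙_ M) ⊗ₘ (λ_ x).inv)) ≫
            T.Tr.map ((𝟙 (𝟙_ M) ⊗ₘ (λ_ x).hom) ≫ (λ_ x).hom) := by
          simp [← Functor.map_comp, tensorHom_comp_tensorHom]
      _ = T.Tr.map (((λ_ (𝟙_ M)).inv ⊗ₘ 𝟙 x) ≫ (α_ (𝟙_ M) (𝟙_ M) x).hom) ≫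
            T.Tr.map ((𝟙 (𝟙_ M) ⊗ₘ (λ_ x).hom) ≫ (λ_ x).hom) := by rw [key]
      _ = _ := by
          rw [← Functor.map_comp, ← Functor.map_comp]
          congr 1
          coherence
  exact (cancel_epi _).mp goal'
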